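/- Lower bound of Theorem 3.1 (Lemma 3.4): For every integer n ≥ 2 and every δ > 0, there exist a profile (f_1,…,f_n) of piecewise constant value density functions on [0,1] and a piecewise constant misreport f_1' such that, for every complete allocation A maximizing ∏_{i=1}^n v_i(A_i) with respect to (f_1,…,f_n), there exists a complete allocation A' maximizing the Nash product with respect to (f_1', f_2,…,f_n) satisfying v_1(A_1') ≥ (2 − 1/n − δ) · v_1(A_1). Consequently, the incentive ratio of the Maximum Nash Welfare mechanism is at least 2 − 1/n. -/

import Mathlib

open MeasureTheory Set

noncomputable def cakeval (f : ℝ → ℝ) (S : Set ℝ) : ℝ := ∫ x in S, f x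

def PiecewiseConstant (f : ℝ → ℝ) : Prop :=
  ∃ (m : ℕ) (a : Fin (m + 1) → ℝ) (c : Fin m → ℝ),
    a 0 = 0 ∧ a (Fin.last m) = 1 ∧ Monotone a ∧
    ∀ t : Fin m, ∀ x ∈ Set.Ico (a t.castSucc) (a t.succ), f x = c t

def ValidDensity (f : ℝ → ℝ) : Prop :=
  PiecewiseConstant f ∧ (∀ x, 0 ≤ f x) ∧ 0 < cakeval f (Set.Icc 0 1)

def FinUnionIcc (S : Set ℝ) : Prop :=
  ∃ (k : ℕ) (a b : Fin k → ℝ), S = ⋃ j, Set.Icc (a j) (b j)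

def IsAllocOn {n : ℕ} (C : Set ℝ) (A : Fin n → Set ℝ) : Prop :=
  (∀ i, A i ⊆ C) ∧ (∀ i, FinUnionIcc (A i)) ∧
    Pairwise fun i j => volume (A i ∩ A j) = 0

def IsAlloc {n : ℕ} (A : Fin n → Set ℝ) : Prop := IsAllocOn (Set.Icc 0 1) A

def CompleteAlloc {n : ℕ} (A : Fin n → Set ℝ) : Prop := (⋃ i, A i) = Set.Icc (0 : ℝ) 1

noncomputable def nashProd {n : ℕ} (f : Fin n → ℝ → ℝ) (A : Fin n → Set ℝ) : ℝ :=
  ∏ i, cakeval (f i) (A i)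

def IsMNWOn {n : ℕ} (C : Set ℝ) (f : Fin n → ℝ → ℝ) (A : Fin n → Set ℝ) : Prop :=
  IsAllocOn C A ∧ ∀ B : Fin n → Set ℝ, IsAllocOn C B → nashProd f B ≤ nashProd f A

def IsMNW {n : ℕ} (f : Fin n → ℝ → ℝ) (A : Fin n → Set ℝ) : Prop :=
  IsMNWOn (Set.Icc 0 1) f A

def IsCompleteMNW {n : ℕ} (f : Fin n → ℝ → ℝ) (A : Fin n → Set ℝ) : Prop :=
  IsAlloc A ∧ CompleteAlloc A ∧
    ∀ B : Fin n → Set ℝ, IsAlloc B → CompleteAlloc B → nashProd f B ≤ nashProd f A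

/-! ### Auxiliary material -/

/-- The density used by agents `2,…,n` in the hard instance, and also agent 1's misreport:
`0` below `1/n` and `n/(n-1)` above. -/
noncomputable def gdens (n : ℕ) : ℝ → ℝ :=
  fun x => if x < 1/(n:ℝ) then 0 else (n:ℝ)/((n:ℝ)-1)

lemma FinUnionIcc.measurableSet {S : Set ℝ} (h : FinUnionIcc S) : MeasurableSet S := by
  obtain ⟨k, a, b, rfl⟩ := h
  exact MeasurableSet.iUnion fun j => measurableSet_Icc

lemma finUnionIcc_Icc (a b : ℝ) : FinUnionIcc (Icc a b) :=
  ⟨1, fun _ => a, fun _ => b, (Set.iUnion_const _).symm⟩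

lemma cakeval_one (S : Set ℝ) : cakeval (fun _ => (1:ℝ)) S = (volume S).toReal := by
  rw [cakeval, setIntegral_const]; simp; rfl

lemma cakeval_ind (r c : ℝ) (S : Set ℝ) :
    cakeval (fun x => if x < r then 0 else c) S = c * (volume (S ∩ Ici r)).toReal := by
  have hf : (fun x : ℝ => if x < r then (0:ℝ) else c) = (Ici r).indicator (fun _ => c) := by
    funext x
    by_cases h : x < r
    · rw [if_pos h, Set.indicator_of_notMem (by simpa using h)]
    · rw [if_neg h, Set.indicator_of_mem (by simpa using not_lt.mp h)]
  rw [cakeval, hf, setIntegral_indicator measurableSet_Ici, setIntegral_const]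
  simp [mul_comm]; exact Or.inl rfl

lemma cakeval_g (n : ℕ) (S : Set ℝ) :
    cakeval (gdens n) S = (n:ℝ)/((n:ℝ)-1) * (volume (S ∩ Ici (1/(n:ℝ)))).toReal :=
  cakeval_ind _ _ S

lemma cakeval_g_of_subset (n : ℕ) {S : Set ℝ} (hS : S ⊆ Icc 0 1) :
    cakeval (gdens n) S = (n:ℝ)/((n:ℝ)-1) * (volume (S ∩ Icc (1/(n:ℝ)) 1)).toReal := by
  rw [cakeval_g]
  congr 3
  ext x
  exact ⟨fun ⟨h1, h2⟩ => ⟨h1, h2, (hS h1).2⟩, fun ⟨h1, h2, _⟩ => ⟨h1, h2⟩⟩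

lemma cakeval_g_Icc (n : ℕ) {a b : ℝ} (ha : 1/(n:ℝ) ≤ a) (hab : a ≤ b) :
    cakeval (gdens n) (Icc a b) = (n:ℝ)/((n:ℝ)-1) * (b - a) := by
  rw [cakeval_g]
  have h1 : Icc a b ∩ Ici (1/(n:ℝ)) = Icc a b :=
    Set.inter_eq_left.2 (fun x hx => le_trans ha hx.1)
  rw [h1, Real.volume_Icc, ENNReal.toReal_ofReal (by linarith)]

lemma cakeval_nonneg {f : ℝ → ℝ} (hf : ∀ x, 0 ≤ f x) (S : Set ℝ) : 0 ≤ cakeval f S :=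
  MeasureTheory.integral_nonneg hf

/-- AM–GM for a finite product of nonnegative reals. -/
lemma amgm {ι : Type*} (s : Finset ι) (z : ι → ℝ) (hz : ∀ i ∈ s, 0 ≤ z i) :
    ∏ i ∈ s, z i ≤ ((∑ i ∈ s, z i) / s.card) ^ (s.card : ℕ) := by
  rcases Finset.eq_empty_or_nonempty s with rfl | hs
  · simp
  have hcard : 0 < (s.card : ℝ) := by exact_mod_cast hs.card_pos
  have h := Real.geom_mean_le_arith_mean s (fun _ => 1) z (fun _ _ => zero_le_one)
    (by simpa using hcard) hz
  simp only [Real.rpow_one, one_mul, Finset.sum_const, nsmul_eq_mul, mul_one] at h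
  have hprod : 0 ≤ ∏ i ∈ s, z i := Finset.prod_nonneg hz
  have h2 : ((∏ i ∈ s, z i) ^ ((s.card : ℝ))⁻¹) ^ (s.card : ℕ) ≤
      ((∑ i ∈ s, z i) / s.card) ^ (s.card : ℕ) :=
    pow_le_pow_left₀ (Real.rpow_nonneg hprod _) h _
  calc ∏ i ∈ s, z i = ((∏ i ∈ s, z i) ^ ((s.card : ℝ))⁻¹) ^ (s.card : ℕ) := by
        rw [← Real.rpow_natCast ((∏ i ∈ s, z i) ^ ((s.card : ℝ))⁻¹), ← Real.rpow_mul hprod,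
          inv_mul_cancel₀ (ne_of_gt hcard), Real.rpow_one]
    _ ≤ _ := h2

lemma glue_nat (q : ℕ → ℝ) (hq : Monotone q) :
    ∀ n : ℕ, 0 < n → (⋃ i < n, Icc (q i) (q (i+1))) = Icc (q 0) (q n) := by
  intro n
  induction n with
  | zero => omega
  | succ m ih =>
    intro _
    rw [biUnion_lt_succ]
    rcases Nat.eq_zero_or_pos m with rfl | hm
    · simp
    · rw [ih hm, Set.Icc_union_Icc_eq_Icc (hq (Nat.zero_le m)) (hq (Nat.le_succ m))]

lemma glue_fin (q : ℕ → ℝ) (hq : Monotone q) (n : ℕ) (hn : 0 < n) :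
    (⋃ i : Fin n, Icc (q i) (q (i+1))) = Icc (q 0) (q n) := by
  rw [← glue_nat q hq n hn]
  ext x
  simp only [Set.mem_iUnion]
  exact ⟨fun ⟨i, hi⟩ => ⟨i, i.isLt, hi⟩, fun ⟨i, hi, hx⟩ => ⟨⟨i, hi⟩, hx⟩⟩

lemma pairwise_null_glue (q : ℕ → ℝ) (hq : Monotone q) (n : ℕ) :
    Pairwise fun i j : Fin n =>
      volume (Icc (q i) (q (i+1)) ∩ Icc (q j) (q (j+1))) = 0 := by
  have key : ∀ i j : Fin n, (i:ℕ) < (j:ℕ) →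
      volume (Icc (q i) (q (i+1)) ∩ Icc (q j) (q (j+1))) = 0 := by
    intro i j hij
    have h1 : Icc (q i) (q (i+1)) ∩ Icc (q j) (q (j+1)) ⊆ Icc (q j) (q (i+1)) := by
      rintro x ⟨⟨_, hx2⟩, hx3, _⟩; exact ⟨hx3, hx2⟩
    refine measure_mono_null h1 ?_
    rw [Real.volume_Icc]
    have : q (i+1) ≤ q j := hq hij
    simp only [ENNReal.ofReal_eq_zero]; linarith
  intro i j hij
  rcases lt_or_gt_of_ne hij with h | h
  · exact key i j (by exact_mod_cast h)
  · rw [Set.inter_comm]; exact key j i (by exact_mod_cast h)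

/-- An interval partition given by a monotone sequence of cut points is a complete allocation. -/
lemma alloc_of_cuts (n : ℕ) (hn : 0 < n) (q : ℕ → ℝ) (hq : Monotone q)
    (h0 : q 0 = 0) (h1 : q n = 1) :
    IsAlloc (fun i : Fin n => Icc (q i) (q (i+1))) ∧
      CompleteAlloc (fun i : Fin n => Icc (q i) (q (i+1))) := by
  have hg := glue_fin q hq n hn
  rw [h0, h1] at hg
  refine ⟨⟨fun i => ?_, fun i => finUnionIcc_Icc _ _, pairwise_null_glue q hq n⟩, hg⟩
  rw [← hg]
  exact Set.subset_iUnion (fun i : Fin n => Icc (q i) (q (i+1))) i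

lemma sum_vol_le {n : ℕ} (A : Fin n → Set ℝ) (hmeas : ∀ i, MeasurableSet (A i))
    (hdisj : Pairwise fun i j => volume (A i ∩ A j) = 0) {T : Set ℝ}
    (hT : MeasurableSet T) (hTfin : volume T ≠ ⊤) :
    ∑ i, (volume (A i ∩ T)).toReal ≤ (volume T).toReal := by
  have hAE : Pairwise (Function.onFun (MeasureTheory.AEDisjoint volume) fun i => A i ∩ T) := by
    intro i j hij
    exact measure_mono_null (by rintro x ⟨⟨h1,_⟩,⟨h2,_⟩⟩; exact ⟨h1, h2⟩) (hdisj hij)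
  have hNM : ∀ i, NullMeasurableSet (A i ∩ T) := fun i =>
    ((hmeas i).inter hT).nullMeasurableSet
  have hsum : ∑ i, volume (A i ∩ T) ≤ volume T := by
    rw [← tsum_fintype (L := SummationFilter.unconditional _), ← measure_iUnion₀ hAE hNM]
    exact measure_mono (Set.iUnion_subset fun i => Set.inter_subset_right)
  have hfin : ∀ i : Fin n, volume (A i ∩ T) ≠ ⊤ := fun i =>
    ne_top_of_le_ne_top hTfin (measure_mono Set.inter_subset_right)
  rw [← ENNReal.toReal_sum (fun i _ => hfin i)]
  exact ENNReal.toReal_mono hTfin hsum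

lemma phi_strictAnti (k : ℕ) (hk : 1 ≤ k) :
    StrictAntiOn (fun u : ℝ => u * (1-u)^k) (Icc (1/(k+1) : ℝ) 1) := by
  apply strictAntiOn_of_deriv_neg (convex_Icc _ _)
  · exact (continuous_id.mul ((continuous_const.sub continuous_id).pow k)).continuousOn
  · intro u hu
    rw [interior_Icc] at hu
    obtain ⟨hu1, hu2⟩ := hu
    have hd : HasDerivAt (fun u : ℝ => u * (1-u)^k)
        (1 * (1-u)^k + u * ((k:ℕ) * (1-u)^(k-1) * (-1))) u :=
      (hasDerivAt_id u).mul (((hasDerivAt_id u).const_sub 1).pow k)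
    rw [hd.deriv]
    have h1u : (0:ℝ) < 1 - u := by linarith
    have hexp : (1-u)^k = (1-u) * (1-u)^(k-1) := by
      rw [← pow_succ']
      congr 1
      omega
    have hfac : 1 * (1-u)^k + u * ((k:ℕ) * (1-u)^(k-1) * (-1))
        = (1-u)^(k-1) * (1 - (k+1) * u) := by
      rw [hexp]; push_cast; ring
    rw [hfac]
    have h2 : 1 - ((k:ℝ)+1) * u < 0 := by
      have h2' : 1/((k:ℝ)+1) < u := hu1
      have hk1 : (0:ℝ) < (k:ℝ)+1 := by positivity
      rw [div_lt_iff₀ hk1] at h2'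
      nlinarith
    have h3 : (0:ℝ) < (1-u)^(k-1) := by positivity
    nlinarith

/-- The Nash product of an allocation under the profile where everyone has density `gdens n`
is at most `(1/n)^n`. -/
lemma nash_g_le (n : ℕ) (hn : 2 ≤ n) (B : Fin n → Set ℝ) (hB : IsAlloc B) :
    nashProd (fun _ => gdens n) B ≤ (1/(n:ℝ))^(n : ℕ) := by
  obtain ⟨hsub, hfu, hdisj⟩ := hB
  have hN : (2:ℝ) ≤ (n:ℝ) := by exact_mod_cast hn
  have hN0 : (0:ℝ) < n := by linarith
  have hN1 : (0:ℝ) < (n:ℝ) - 1 := by linarith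
  set N := (n:ℝ)
  set m : Fin n → ℝ := fun i => (volume (B i ∩ Icc (1/N) 1)).toReal with hm
  have hmnn : ∀ i, 0 ≤ m i := fun i => ENNReal.toReal_nonneg
  have hval : ∀ i, cakeval (gdens n) (B i) = N/(N-1) * m i := fun i =>
    cakeval_g_of_subset n (hsub i)
  have hsum : ∑ i, m i ≤ 1 - 1/N := by
    have h := sum_vol_le B (fun i => (hfu i).measurableSet) hdisj
      (measurableSet_Icc (a := 1/N) (b := 1))
      (by rw [Real.volume_Icc]; exact ENNReal.ofReal_ne_top)
    have h1N : 1/N ≤ 1 := by rw [div_le_one hN0]; linarith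
    rw [Real.volume_Icc, ENNReal.toReal_ofReal (by linarith : (0:ℝ) ≤ 1 - 1/N)] at h
    exact h
  have hprod : nashProd (fun _ => gdens n) B = (N/(N-1))^(n:ℕ) * ∏ i, m i := by
    rw [nashProd]
    simp_rw [hval]
    rw [Finset.prod_mul_distrib, Finset.prod_const, Finset.card_univ, Fintype.card_fin]
  rw [hprod]
  have hamgm : ∏ i, m i ≤ ((∑ i, m i) / n) ^ (n:ℕ) := by
    have := amgm Finset.univ m (fun i _ => hmnn i)
    simpa [Finset.card_univ] using this
  have h2 : ((∑ i, m i) / N) ^ (n:ℕ) ≤ ((1 - 1/N)/N) ^ (n:ℕ) := by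
    apply pow_le_pow_left₀ (by positivity)
    gcongr
  have key : (N/(N-1))^(n:ℕ) * ∏ i, m i ≤ (N/(N-1))^(n:ℕ) * ((1 - 1/N)/N) ^ (n:ℕ) := by
    have := hamgm.trans h2
    exact mul_le_mul_of_nonneg_left this (by positivity)
  refine key.trans_eq ?_
  rw [← mul_pow]
  congr 1
  field_simp

lemma valid_one : ValidDensity (fun _ => (1:ℝ)) := by
  refine ⟨⟨1, fun i => ((i:ℕ):ℝ), fun _ => 1, by simp, by simp [Fin.last], ?_, fun _ _ _ => rfl⟩,
    fun _ => zero_le_one, ?_⟩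
  · intro i j hij
    exact_mod_cast Nat.cast_le.2 hij
  · rw [cakeval_one, Real.volume_Icc]
    norm_num

lemma valid_g (n : ℕ) (hn : 2 ≤ n) : ValidDensity (gdens n) := by
  have hN : (2:ℝ) ≤ (n:ℝ) := by exact_mod_cast hn
  have hN0 : (0:ℝ) < n := by linarith
  have hN1 : (0:ℝ) < (n:ℝ) - 1 := by linarith
  have hr0 : (0:ℝ) < 1/(n:ℝ) := by positivity
  have hr1 : 1/(n:ℝ) ≤ 1 := by rw [div_le_one hN0]; linarith
  refine ⟨⟨2, fun i => if (i:ℕ) = 0 then 0 else if (i:ℕ) = 1 then 1/(n:ℝ) else 1,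
      fun t => if (t:ℕ) = 0 then 0 else (n:ℝ)/((n:ℝ)-1), by simp, by simp [Fin.last], ?_, ?_⟩,
    ?_, ?_⟩
  · intro i j hij
    have hij' : (i:ℕ) ≤ (j:ℕ) := hij
    fin_cases i <;> fin_cases j <;> simp_all <;> linarith
  · intro t x hx
    fin_cases t
    · simp only [Fin.castSucc, Fin.succ] at hx
      norm_num at hx ⊢
      rw [gdens, if_pos (by rw [one_div]; exact hx.2)]
    · simp only [Fin.castSucc, Fin.succ] at hx
      norm_num at hx ⊢
      rw [gdens, if_neg (not_lt.2 (by rw [one_div]; exact hx.1))]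
  · intro x
    rw [gdens]
    split <;> positivity
  · rw [cakeval_g]
    have h1 : Icc (0:ℝ) 1 ∩ Ici (1/(n:ℝ)) = Icc (1/(n:ℝ)) 1 := by
      ext x
      constructor
      · rintro ⟨⟨_, h2⟩, h3⟩; exact ⟨h3, h2⟩
      · rintro ⟨h3, h2⟩; exact ⟨⟨le_trans hr0.le h3, h2⟩, h3⟩
    rw [h1, Real.volume_Icc, ENNReal.toReal_ofReal (by linarith)]
    have : (0:ℝ) < 1 - 1/(n:ℝ) := by
      rcases lt_or_eq_of_le hr1 with h | h
      · linarith
      · exfalso; rw [div_eq_one_iff_eq (ne_of_gt hN0)] at h; linarith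
    positivity

/-- Lower bound of Theorem 3.1 (Lemma 3.4): for every `n ≥ 2` and `δ > 0` there are
a profile and a misreport by agent 1 (index `0`) witnessing an incentive ratio of at
least `2 - 1/n - δ` for the MNW mechanism. -/
theorem mnw_incentive_ratio_lower (n : ℕ) (hn : 2 ≤ n) (δ : ℝ) (hδ : 0 < δ) :
    ∃ (f : Fin n → ℝ → ℝ) (f1' : ℝ → ℝ),
      (∀ i, ValidDensity (f i)) ∧ ValidDensity f1' ∧
      ∀ A : Fin n → Set ℝ, IsCompleteMNW f A →
        ∃ A' : Fin n → Set ℝ,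
          IsCompleteMNW (Function.update f ⟨0, by omega⟩ f1') A' ∧
          (2 - 1 / (n : ℝ) - δ) * cakeval (f ⟨0, by omega⟩) (A ⟨0, by omega⟩) ≤
            cakeval (f ⟨0, by omega⟩) (A' ⟨0, by omega⟩) := by
  have hn0 : 0 < n := by omega
  have hN : (2:ℝ) ≤ (n:ℝ) := by exact_mod_cast hn
  have hN0 : (0:ℝ) < n := by linarith
  have hNne : (n:ℝ) ≠ 0 := ne_of_gt hN0
  have hN1 : (0:ℝ) < (n:ℝ) - 1 := by linarith
  have hr0 : (0:ℝ) < 1/(n:ℝ) := by positivity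
  have hr1 : 1/(n:ℝ) < 1 := by rw [div_lt_one hN0]; linarith
  set N := (n:ℝ) with hNdef
  set i0 : Fin n := ⟨0, by omega⟩ with hi0
  set f : Fin n → ℝ → ℝ := fun i => if i = i0 then (fun _ => 1) else gdens n with hf
  refine ⟨f, gdens n, ?_, valid_g n hn, ?_⟩
  · intro i
    by_cases h : i = i0
    · simp only [hf, if_pos h]; exact valid_one
    · simp only [hf, if_neg h]; exact valid_g n hn
  intro A hA
  obtain ⟨⟨hAsub, hAfu, hAdisj⟩, hAcomp, hAopt⟩ := hA
  have hfi0 : f i0 = fun _ => (1:ℝ) := by simp [hf]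
  have hupd : Function.update f i0 (gdens n) = fun _ => gdens n := by
    funext i
    by_cases h : i = i0
    · subst h; simp
    · rw [Function.update_of_ne h]; simp [hf, if_neg h]
  -- cut points for the misreport allocation A'
  set d : ℝ := (N-1)/(N*N) with hd
  have hdpos : 0 < d := by positivity
  set q1 : ℕ → ℝ := fun i => if i = 0 then 0 else 1/N + (i:ℝ) * d with hq1
  have hq1mono : Monotone q1 := by
    apply monotone_nat_of_le_succ
    intro i
    rcases Nat.eq_zero_or_pos i with rfl | hi
    · simp only [hq1, if_pos rfl, if_neg (Nat.one_ne_zero)]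
      push_cast
      positivity
    · rw [hq1]
      simp only [if_neg hi.ne', if_neg (Nat.succ_ne_zero i)]
      push_cast
      nlinarith [hdpos]
  have hq1n : q1 n = 1 := by
    rw [hq1]
    simp only [if_neg hn0.ne']
    rw [hd]
    field_simp
    ring
  have hAcuts := alloc_of_cuts n hn0 q1 hq1mono (by simp [hq1]) hq1n
  set A' : Fin n → Set ℝ := fun i : Fin n => Icc (q1 i) (q1 (i+1)) with hA'
  -- every piece of A' has gdens-value 1/N
  have hA'val : ∀ i : Fin n, cakeval (gdens n) (A' i) = 1/N := by
    intro i
    have hval_d : N/(N-1) * d = 1/N := by rw [hd]; field_simp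
    rcases Nat.eq_zero_or_pos (i:ℕ) with h0 | hpos
    · have hA'i : A' i = Icc 0 (1/N + d) := by
        rw [hA']
        simp only [h0]
        norm_num [hq1]
      rw [hA'i, cakeval_g]
      have hint : Icc (0:ℝ) (1/N + d) ∩ Ici (1/N) = Icc (1/N) (1/N + d) := by
        ext x
        exact ⟨fun ⟨⟨_, hb⟩, hc⟩ => ⟨hc, hb⟩, fun ⟨hc, hb⟩ => ⟨⟨le_trans hr0.le hc, hb⟩, hc⟩⟩
      rw [hint, Real.volume_Icc, ENNReal.toReal_ofReal (by linarith)]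
      rw [show 1/N + d - 1/N = d by ring]
      exact hval_d
    · have hA'i : A' i = Icc (1/N + (i:ℕ) * d) (1/N + ((i:ℕ)+1) * d) := by
        rw [hA']
        simp only [if_neg hpos.ne', if_neg (Nat.succ_ne_zero (i:ℕ)), hq1]
        push_cast
        ring_nf
      have hcast1 : (1:ℝ) ≤ ((i:ℕ):ℝ) := by exact_mod_cast hpos
      rw [hA'i, cakeval_g_Icc n (by rw [← hNdef]; nlinarith [hdpos, hcast1])
        (by nlinarith [hdpos])]
      rw [show 1/N + ((i:ℕ)+1) * d - (1/N + (i:ℕ) * d) = d by ring]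
      exact hval_d
  have hA'nash : nashProd (fun _ => gdens n) A' = (1/N)^(n:ℕ) := by
    rw [nashProd]
    rw [Finset.prod_congr rfl (fun i _ => hA'val i), Finset.prod_const, Finset.card_univ,
      Fintype.card_fin]
  -- the value bound for truthful MNW allocations: agent i0 gets at most 1/N
  have hv0 : cakeval (f i0) (A i0) ≤ 1/N := by
    classical
    set k : ℕ := n - 1 with hk
    have hk1 : 1 ≤ k := by omega
    have hkN : (k:ℝ) = N - 1 := by
      rw [hk, Nat.cast_sub (by omega : 1 ≤ n)]
      norm_num
      exact hNdef.symm
    have hkN1 : (k:ℝ) + 1 = N := by rw [hkN]; ring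
    -- reference allocation B0 : i-th piece is [i/n, (i+1)/n]
    set q0 : ℕ → ℝ := fun i => (i:ℝ)/N with hq0
    have hq0mono : Monotone q0 := by
      intro a b hab
      simp only [hq0]
      have hcast : ((a:ℕ):ℝ) ≤ ((b:ℕ):ℝ) := by exact_mod_cast hab
      exact div_le_div_of_nonneg_right hcast hN0.le
    have hB0cuts := alloc_of_cuts n hn0 q0 hq0mono (by simp [hq0])
      (by simp only [hq0]; exact div_self hNne)
    set B0 : Fin n → Set ℝ := fun i : Fin n => Icc (q0 i) (q0 (i+1)) with hB0
    have hopt := hAopt B0 hB0cuts.1 hB0cuts.2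
    have hB0i0 : cakeval (f i0) (B0 i0) = 1/N := by
      have hset : B0 i0 = Icc 0 (1/N) := by
        rw [hB0]
        norm_num [hq0, hi0]
      rw [hfi0, hset, cakeval_one, Real.volume_Icc, ENNReal.toReal_ofReal (by linarith)]
      ring
    have hB0i : ∀ i : Fin n, i ≠ i0 → cakeval (f i) (B0 i) = 1/(N-1) := by
      intro i hi
      have h1le : (1:ℝ) ≤ ((i:ℕ):ℝ) := by
        have hne : (i:ℕ) ≠ 0 := fun h => hi (Fin.ext h)
        exact_mod_cast Nat.one_le_iff_ne_zero.2 hne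
      have hfi : f i = gdens n := by simp only [hf, if_neg hi]
      rw [hfi]
      show cakeval (gdens n) (Icc (q0 i) (q0 ((i:ℕ)+1))) = 1/(N-1)
      have hle : 1/(n:ℝ) ≤ q0 ((i:ℕ)) := by
        simp only [hq0]
        rw [← hNdef]
        calc 1/N = (1:ℝ)/N := rfl
          _ ≤ ((i:ℕ):ℝ)/N := div_le_div_of_nonneg_right h1le hN0.le
      rw [cakeval_g_Icc n hle (hq0mono (Nat.le_succ _))]
      simp only [hq0]
      rw [← hNdef]
      push_cast
      rw [div_sub_div_same, show ((i:ℕ):ℝ) + 1 - ((i:ℕ):ℝ) = 1 by ring]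
      field_simp
    have hB0nash : nashProd f B0 = (1/N) * (1/(N-1))^k := by
      rw [nashProd, ← Finset.mul_prod_erase Finset.univ _ (Finset.mem_univ i0), hB0i0,
        Finset.prod_congr rfl (fun i hi => hB0i i (Finset.ne_of_mem_erase hi)),
        Finset.prod_const, Finset.card_erase_of_mem (Finset.mem_univ i0), Finset.card_univ,
        Fintype.card_fin]
    -- measure bookkeeping for A
    set m : Fin n → ℝ := fun i => (volume (A i ∩ Icc (1/N) 1)).toReal with hm
    have hmnn : ∀ i, 0 ≤ m i := fun i => ENNReal.toReal_nonneg
    have hsum : ∑ i, m i ≤ 1 - 1/N := by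
      have h := sum_vol_le A (fun i => (hAfu i).measurableSet) hAdisj
        (measurableSet_Icc (a := 1/N) (b := 1))
        (by rw [Real.volume_Icc]; exact ENNReal.ofReal_ne_top)
      rwa [Real.volume_Icc, ENNReal.toReal_ofReal (by linarith)] at h
    have hvali : ∀ i : Fin n, i ≠ i0 → cakeval (f i) (A i) = N/(N-1) * m i := by
      intro i hi
      simp only [hf, if_neg hi]
      exact cakeval_g_of_subset n (hAsub i)
    set v0 : ℝ := cakeval (f i0) (A i0) with hv0def
    have hv0m : v0 ≤ 1/N + m i0 := by
      rw [hv0def, hfi0, cakeval_one]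
      have hsplit : A i0 ⊆ (A i0 ∩ Iio (1/N)) ∪ (A i0 ∩ Ici (1/N)) := by
        intro x hx
        rcases lt_or_ge x (1/N) with h | h
        · exact Or.inl ⟨hx, h⟩
        · exact Or.inr ⟨hx, h⟩
      have h1 : volume (A i0 ∩ Iio (1/N)) ≤ ENNReal.ofReal (1/N) := by
        have hsub1 : A i0 ∩ Iio (1/N) ⊆ Icc 0 (1/N) := by
          rintro x ⟨hx1, hx2⟩
          exact ⟨(hAsub i0 hx1).1, hx2.le⟩
        calc volume (A i0 ∩ Iio (1/N)) ≤ volume (Icc (0:ℝ) (1/N)) := measure_mono hsub1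
          _ = ENNReal.ofReal (1/N) := by rw [Real.volume_Icc]; norm_num
      have h2 : A i0 ∩ Ici (1/N) = A i0 ∩ Icc (1/N) 1 := by
        ext x
        exact ⟨fun ⟨ha, hb⟩ => ⟨ha, hb, (hAsub i0 ha).2⟩, fun ⟨ha, hb, _⟩ => ⟨ha, hb⟩⟩
      have hfin : volume (A i0 ∩ Icc (1/N) 1) ≠ ⊤ := by
        refine ne_top_of_le_ne_top ?_ (measure_mono Set.inter_subset_right)
        rw [Real.volume_Icc]; exact ENNReal.ofReal_ne_top
      have h3 : volume (A i0) ≤ ENNReal.ofReal (1/N) + volume (A i0 ∩ Icc (1/N) 1) := by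
        calc volume (A i0) ≤ volume ((A i0 ∩ Iio (1/N)) ∪ (A i0 ∩ Ici (1/N))) :=
              measure_mono hsplit
          _ ≤ volume (A i0 ∩ Iio (1/N)) + volume (A i0 ∩ Ici (1/N)) := measure_union_le _ _
          _ ≤ _ := by rw [h2]; exact add_le_add_left h1 _
      have h4 := ENNReal.toReal_mono
        (ENNReal.add_ne_top.2 ⟨ENNReal.ofReal_ne_top, hfin⟩) h3
      rwa [ENNReal.toReal_add ENNReal.ofReal_ne_top hfin, ENNReal.toReal_ofReal hr0.le] at h4
    -- AM-GM bound on the others' product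
    have herase_card : (Finset.univ.erase i0).card = k := by
      rw [Finset.card_erase_of_mem (Finset.mem_univ i0), Finset.card_univ, Fintype.card_fin]
    have hm_erase_sum : ∑ i ∈ Finset.univ.erase i0, m i = (∑ i, m i) - m i0 :=
      Finset.sum_erase_eq_sub (Finset.mem_univ i0)
    set u : ℝ := 1/N + m i0 with hu
    have hu0 : 1/N ≤ u := by rw [hu]; linarith [hmnn i0]
    have hu1 : u ≤ 1 := by
      have hle : m i0 ≤ ∑ i, m i := Finset.single_le_sum (fun i _ => hmnn i) (Finset.mem_univ i0)
      rw [hu]; linarith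
    have hprodm : ∏ i ∈ Finset.univ.erase i0, m i ≤ ((1-u)/(N-1))^k := by
      have h1 := amgm (Finset.univ.erase i0) m (fun i _ => hmnn i)
      rw [herase_card, hkN] at h1
      refine h1.trans (pow_le_pow_left₀ ?_ ?_ k)
      · exact div_nonneg (Finset.sum_nonneg (fun i _ => hmnn i)) hN1.le
      · refine div_le_div_of_nonneg_right ?_ hN1.le
        rw [hm_erase_sum, hu]
        linarith
    have hnashA : nashProd f A ≤ u * ((N/(N-1))^k * ((1-u)/(N-1))^k) := by
      rw [nashProd, ← Finset.mul_prod_erase Finset.univ _ (Finset.mem_univ i0)]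
      have hprod_e : ∏ i ∈ Finset.univ.erase i0, cakeval (f i) (A i)
          = (N/(N-1))^k * ∏ i ∈ Finset.univ.erase i0, m i := by
        rw [Finset.prod_congr rfl (fun i hi => hvali i (Finset.ne_of_mem_erase hi)),
          Finset.prod_mul_distrib, Finset.prod_const, herase_card]
      rw [hprod_e]
      have hub : (N/(N-1))^k * ∏ i ∈ Finset.univ.erase i0, m i
          ≤ (N/(N-1))^k * ((1-u)/(N-1))^k :=
        mul_le_mul_of_nonneg_left hprodm (pow_nonneg (div_nonneg hN0.le hN1.le) k)
      have hmid : 0 ≤ (N/(N-1))^k * ∏ i ∈ Finset.univ.erase i0, m i :=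
        mul_nonneg (pow_nonneg (div_nonneg hN0.le hN1.le) k)
          (Finset.prod_nonneg (fun i _ => hmnn i))
      exact mul_le_mul hv0m hub hmid (by rw [hu]; linarith [hmnn i0, hr0])
    have hcomb : (1/N) * (1/(N-1))^k ≤ u * ((N/(N-1))^k * ((1-u)/(N-1))^k) := by
      rw [← hB0nash]
      exact hopt.trans hnashA
    set C : ℝ := N/((N-1)*(N-1)) with hC
    have hCk : (0:ℝ) < C^k := pow_pos (by rw [hC]; exact div_pos hN0 (mul_pos hN1 hN1)) k
    have hRHS : (N/(N-1))^k * ((1-u)/(N-1))^k = (1-u)^k * C^k := by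
      rw [← mul_pow, ← mul_pow]
      congr 1
      rw [hC]
      field_simp
    have hLHS : (1/(N-1))^k = (1-1/N)^k * C^k := by
      rw [← mul_pow]
      congr 1
      rw [hC]
      field_simp
    have hphi : (1/N) * (1-1/N)^k ≤ u * (1-u)^k := by
      rw [hRHS, hLHS] at hcomb
      have h5 : ((1/N) * (1-1/N)^k) * C^k ≤ (u * (1-u)^k) * C^k := by
        calc ((1/N) * (1-1/N)^k) * C^k = (1/N) * ((1-1/N)^k * C^k) := by ring
          _ ≤ u * ((1-u)^k * C^k) := hcomb
          _ = (u * (1-u)^k) * C^k := by ring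
      exact le_of_mul_le_mul_right h5 hCk
    by_contra hcon
    push_neg at hcon
    have huL : 1/N < u := lt_of_lt_of_le hcon hv0m
    have hmem1 : (1/N) ∈ Icc (1/((k:ℝ)+1)) 1 := by
      rw [hkN1]
      exact ⟨le_refl _, hr1.le⟩
    have hmem2 : u ∈ Icc (1/((k:ℝ)+1)) 1 := by
      rw [hkN1]
      exact ⟨hu0, hu1⟩
    have hlt := phi_strictAnti k hk1 hmem1 hmem2 huL
    simp only at hlt
    linarith
  have hv0nn : 0 ≤ cakeval (f i0) (A i0) := by
    rw [hfi0]; exact cakeval_nonneg (fun _ => zero_le_one) _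
  refine ⟨A', ⟨hAcuts.1, hAcuts.2, ?_⟩, ?_⟩
  · intro B hB _
    rw [hupd, hA'nash]
    exact nash_g_le n hn B hB
  · have hval' : cakeval (f i0) (A' i0) = 1/N + d := by
      have : A' i0 = Icc (q1 0) (q1 1) := rfl
      rw [hfi0, this, cakeval_one, hq1]
      simp only [if_pos rfl, if_neg Nat.one_ne_zero]
      rw [Real.volume_Icc, ENNReal.toReal_ofReal (by push_cast; norm_num; positivity)]
      push_cast
      ring
    show (2 - 1/N - δ) * cakeval (f i0) (A i0) ≤ cakeval (f i0) (A' i0)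
    rw [hval']
    rcases le_or_gt (2 - 1/N - δ) 0 with h | h
    · have hle0 : (2 - 1/N - δ) * cakeval (f i0) (A i0) ≤ 0 :=
        mul_nonpos_of_nonpos_of_nonneg h hv0nn
      linarith [hr0, hdpos]
    · have h1 : (2 - 1/N - δ) * cakeval (f i0) (A i0) ≤ (2 - 1/N - δ) * (1/N) :=
        mul_le_mul_of_nonneg_left hv0 h.le
      have h2 : (2 - 1/N) * (1/N) = 1/N + d := by
        rw [hd]; field_simp; ring
      have h3 : 0 ≤ δ * (1/N) := by positivity
      have h4 : (2 - 1/N - δ) * (1/N) = (2 - 1/N) * (1/N) - δ * (1/N) := by ring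
      linarith
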